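/- Let X be a real normed linear space and A, B ⊆ X nonempty with A ∩ B = ∅. If sequences (a_k) ⊆ A and (b_k) ⊆ B satisfy ‖a_k − b_k‖ → d(A,B), then there exist sequences (u_k), (v_k) ⊆ X converging to 0 such that (A − a_k − u_k) ∩ (B − b_k − v_k) = ∅ for every k. -/

import Mathlib

open Filter

/-- The distance between two sets: `inf {‖x − y‖ : x ∈ A, y ∈ B}`. -/
noncomputable def setDist {X : Type*} [NormedAddCommGroup X] (A B : Set X) : ℝ :=
  sInf {d : ℝ | ∃ a ∈ A, ∃ b ∈ B, d = ‖a - b‖}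

/-- Corollary 3.3: along a distance-minimizing sequence of pairs of points there exist
shifts converging to zero that separate the translated sets. -/
theorem stmt_7 {X : Type*} [NormedAddCommGroup X] [NormedSpace ℝ X]
    (A B : Set X) (hAne : A.Nonempty) (hBne : B.Nonempty) (hAB : A ∩ B = ∅)
    (a : ℕ → X) (b : ℕ → X) (ha : ∀ k, a k ∈ A) (hb : ∀ k, b k ∈ B)
    (hconv : Tendsto (fun k => ‖a k - b k‖) atTop (nhds (setDist A B))) :
    ∃ u v : ℕ → X, Tendsto u atTop (nhds (0 : X)) ∧ Tendsto v atTop (nhds (0 : X)) ∧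
      ∀ k, ((fun x => x - a k - u k) '' A) ∩ ((fun x => x - b k - v k) '' B) = ∅ := by
  set d := setDist A B with hd
  have hbdd : BddBelow {r : ℝ | ∃ x ∈ A, ∃ y ∈ B, r = ‖x - y‖} :=
    ⟨0, by rintro r ⟨x, _, y, _, rfl⟩; exact norm_nonneg _⟩
  have hle : ∀ x ∈ A, ∀ y ∈ B, d ≤ ‖x - y‖ := by
    intro x hx y hy
    exact csInf_le hbdd ⟨x, hx, y, hy, rfl⟩
  have hd0 : 0 ≤ d := by
    obtain ⟨x, hx⟩ := hAne; obtain ⟨y, hy⟩ := hBne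
    refine le_csInf ⟨‖x - y‖, x, hx, y, hy, rfl⟩ ?_
    rintro r ⟨x, _, y, _, rfl⟩; exact norm_nonneg _
  have hne : ∀ k, a k ≠ b k := by
    intro k h
    have : a k ∈ A ∩ B := ⟨ha k, h ▸ hb k⟩
    simp [hAB] at this
  have hnk : ∀ k, 0 < ‖a k - b k‖ := fun k => by
    rw [norm_pos_iff, sub_ne_zero]; exact hne k
  -- the scalars
  set t : ℕ → ℝ := fun k => 1 - ((k : ℝ) + 1)⁻¹ with ht
  have ht0 : ∀ k, 0 ≤ t k := by
    intro k
    have h1 : ((k : ℝ) + 1)⁻¹ ≤ 1 := by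
      rw [inv_le_one_iff₀]; right; linarith [Nat.cast_nonneg (α := ℝ) k]
    simp [ht]; linarith
  have ht1 : ∀ k, t k < 1 := by
    intro k
    have : (0 : ℝ) < ((k : ℝ) + 1)⁻¹ := by positivity
    simp [ht]; linarith
  set lam : ℕ → ℝ := fun k => d * t k / ‖a k - b k‖ with hlam
  have hlam0 : ∀ k, 0 ≤ lam k := fun k => by
    have := hnk k; have := ht0 k; positivity
  have hlam1 : ∀ k, lam k ≤ 1 := by
    intro k
    rw [hlam, div_le_one (hnk k)]
    calc d * t k ≤ d * 1 := by
          have := ht0 k; have := ht1 k; nlinarith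
      _ = d := mul_one d
      _ ≤ ‖a k - b k‖ := hle _ (ha k) _ (hb k)
  set c : ℕ → X := fun k => lam k • (a k - b k) with hc
  set u : ℕ → X := fun k => c k - (a k - b k) with hu
  have hnormc : ∀ k, ‖c k‖ = d * t k := by
    intro k
    rw [hc, norm_smul, Real.norm_eq_abs, abs_of_nonneg (hlam0 k), hlam,
      div_mul_cancel₀ _ (ne_of_gt (hnk k))]
  have hnormu : ∀ k, ‖u k‖ = ‖a k - b k‖ - d * t k := by
    intro k
    have : u k = (lam k - 1) • (a k - b k) := by
      simp [hu, hc, sub_smul, one_smul]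
    rw [this, norm_smul, Real.norm_eq_abs, abs_of_nonpos (by linarith [hlam1 k]),
      neg_sub, sub_mul, one_mul, hlam, div_mul_cancel₀ _ (ne_of_gt (hnk k))]
  refine ⟨u, fun _ => 0, ?_, tendsto_const_nhds, ?_⟩
  · rw [tendsto_zero_iff_norm_tendsto_zero]
    have h1 : Tendsto (fun k : ℕ => ‖a k - b k‖ - d * t k) atTop (nhds 0) := by
      have h2 : Tendsto (fun k : ℕ => d * t k) atTop (nhds (d * 1)) := by
        apply Tendsto.const_mul
        have : Tendsto (fun k : ℕ => ((k : ℝ) + 1)⁻¹) atTop (nhds 0) := by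
          simpa using tendsto_one_div_add_atTop_nhds_zero_nat (𝕜 := ℝ)
        simpa [ht] using (tendsto_const_nhds (x := (1:ℝ))).sub this
      have := hconv.sub h2
      simpa using this
    exact h1.congr (fun k => (hnormu k).symm)
  · intro k
    rw [Set.eq_empty_iff_forall_notMem]
    rintro z ⟨⟨x, hx, hxz⟩, ⟨y, hy, hyz⟩⟩
    simp only at hxz hyz
    have h' : x - a k - u k = y - b k := by rw [← sub_zero (y - b k)]; exact hxz.trans hyz.symm
    rw [hu] at h'
    have hxy : x - y = c k := by
      have h2 : x - c k - b k = y - b k := by rw [← h']; beta_reduce; abel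
      have h3 : x - c k = y := by
        have := congrArg (· + b k) h2
        simpa using this
      rw [sub_eq_iff_eq_add] at h3
      rw [h3]; abel
    rcases eq_or_lt_of_le hd0 with hd' | hd'
    · have hck : c k = 0 := by
        simp [hc, hlam, ← hd']
      have hxey : x = y := by rwa [hck, sub_eq_zero] at hxy
      have : x ∈ A ∩ B := ⟨hx, hxey ▸ hy⟩
      simp [hAB] at this
    · have h1 : d ≤ ‖x - y‖ := hle _ hx _ hy
      rw [hxy, hnormc k] at h1
      nlinarith [ht1 k]
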